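/- Let λ > 0 and N∘ ∈ ℕ, and let Φ∘ be as in the context. Define Ψ(x) := Φ∘(x/2) − Φ∘(x). Then Ψ is an even C_c^∞(ℝ) function with Ψ(s) = 0 for |s| ≤ 1/2 and Ψ(s) = 0 for |s| ≥ 2, and ∫_0^∞ ϱ^λ (d/dϱ)^j Ψ̂(ϱ) dϱ = 0 for every integer j with 0 ≤ j ≤ N∘. -/

import Mathlib

open MeasureTheory Filter
open scoped ENNReal NNReal RealInnerProductSpace BigOperators Topology

noncomputable section

/-- `ℝ^d` as a Euclidean space. -/
abbrev Euc (d : ℕ) : Type := EuclideanSpace ℝ (Fin d)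

/-- The geometric setup: `Ω` is a bounded open convex subset of `ℝ^d` containing the origin,
`ρ` is its Minkowski functional, which is assumed to be smooth away from the origin and
positive away from the origin. -/
structure IsMinkowskiGauge (d : ℕ) (Ω : Set (Euc d)) (ρ : Euc d → ℝ) : Prop where
  isOpen : IsOpen Ω
  convex : Convex ℝ Ω
  isBounded : Bornology.IsBounded Ω
  zero_mem : (0 : Euc d) ∈ Ω
  eq_gauge : ρ = gauge Ω
  smooth : ContDiffOn ℝ (⊤ : ℕ∞) ρ {(0 : Euc d)}ᶜ
  pos : ∀ ξ : Euc d, ξ ≠ 0 → 0 < ρ ξ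

/-- Everywhere nonvanishing Gaussian curvature of `∂Ω = {ρ = 1}`: for every `ξ ≠ 0`
the Hessian of `ρ` at `ξ` has rank `d - 1`. -/
def HasNonvanishingCurvature (d : ℕ) (ρ : Euc d → ℝ) : Prop :=
  ∀ ξ : Euc d, ξ ≠ 0 →
    LinearMap.rank ((fderiv ℝ (fderiv ℝ ρ) ξ : Euc d →L[ℝ] (Euc d →L[ℝ] ℝ)) :
      Euc d →ₗ[ℝ] (Euc d →L[ℝ] ℝ)) = (d - 1 : ℕ)

/-- The Fourier transform `f̂(ξ) = ∫ f(y) e^{−i⟨y,ξ⟩} dy` on `ℝ^d`. -/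
def FTd {d : ℕ} (f : Euc d → ℂ) (ξ : Euc d) : ℂ :=
  ∫ y : Euc d, f y * Complex.exp (-(Complex.I * (⟪y, ξ⟫ : ℂ)))

/-- The Riesz mean `R^λ_{a,t} f(x) = (2π)^{-d} ∫ (1 - ρ(ξ)^a/t^a)_+^λ f̂(ξ) e^{i⟨x,ξ⟩} dξ`. -/
def RieszMean {d : ℕ} (ρ : Euc d → ℝ) (a lam t : ℝ) (f : Euc d → ℂ) (x : Euc d) : ℂ :=
  (((2 * Real.pi) ^ d)⁻¹ : ℝ) •
    ∫ ξ : Euc d, ((max (1 - ρ ξ ^ a / t ^ a) 0) ^ lam : ℝ) •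
      (FTd f ξ * Complex.exp (Complex.I * (⟪x, ξ⟫ : ℂ)))

/-- The critical index `λ(p) = d(1/p - 1/2) - 1/2`. -/
def criticalIndex (d : ℕ) (p : ℝ) : ℝ := (d : ℝ) * (1 / p - 1 / 2) - 1 / 2

/-- One-dimensional Fourier transform `φ̂(ϱ) = ∫ φ(s) e^{-isϱ} ds`. -/
def FT1 (φ : ℝ → ℂ) (ϱ : ℝ) : ℂ :=
  ∫ s : ℝ, φ s * Complex.exp (-(Complex.I * (s : ℂ) * (ϱ : ℂ)))

/-- One-dimensional Fourier transform of a real-valued function. -/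
def FT1R (Φ : ℝ → ℝ) : ℝ → ℂ := FT1 (fun s => (Φ s : ℂ))

/-- The pieces `h_{λ,ℓ}` of the decomposition of the Riesz multiplier. -/
def hfun (χ Φ Ψ : ℝ → ℝ) (lam : ℝ) : ℕ → ℝ → ℂ
  | 0 => fun ϱ => ((2 * Real.pi)⁻¹ * χ ϱ : ℝ) •
      ∫ u : ℝ, ((max (1 - u) 0) ^ lam : ℝ) • FT1R Φ (ϱ - u)
  | (ℓ + 1) => fun ϱ => ((2 * Real.pi)⁻¹ * χ ϱ : ℝ) •
      ∫ u : ℝ, ((max (1 - u) 0) ^ lam : ℝ) •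
        (((2 : ℝ) ^ ℓ) • FT1R Ψ ((2 : ℝ) ^ ℓ * (ϱ - u)))

/-- The data entering the construction of `h_{λ,ℓ}`: a cutoff `χ ∈ C_c^∞((1/2,2))`, an even
`Φ = Φ∘ ∈ C_c^∞(ℝ)` with `Φ∘ = 1` on `[-1/2,1/2]`, `supp Φ∘ ⊆ [-1,1]`, satisfying the moment
cancellation conditions, and `Ψ(x) = Φ∘(x/2) - Φ∘(x)`. -/
structure HData (lam : ℝ) (N0 : ℕ) (χ Φ Ψ : ℝ → ℝ) : Prop where
  hχsm : ContDiff ℝ (⊤ : ℕ∞) χ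
  hχsupp : Function.support χ ⊆ Set.Ioo (1/2 : ℝ) 2
  hΦsm : ContDiff ℝ (⊤ : ℕ∞) Φ
  hΦeven : ∀ s, Φ (-s) = Φ s
  hΦone : ∀ s : ℝ, |s| ≤ 1/2 → Φ s = 1
  hΦzero : ∀ s : ℝ, 1 ≤ |s| → Φ s = 0
  hΦcanc : ∀ j : ℕ, j ≤ N0 → (j : ℝ) ≠ lam →
    (∫ ϱ in Set.Ioi (0 : ℝ), ((ϱ ^ lam : ℝ) : ℂ) * iteratedDeriv j (FT1R Φ) ϱ) = 0
  hΨ : Ψ = fun x => Φ (x / 2) - Φ x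

/-- Inverse Fourier transform on `ℝ^d`. -/
def invFTd {d : ℕ} (m : Euc d → ℂ) (x : Euc d) : ℂ :=
  (((2 * Real.pi) ^ d)⁻¹ : ℝ) •
    ∫ ξ : Euc d, m ξ * Complex.exp (Complex.I * (⟪x, ξ⟫ : ℂ))

/-- The Fourier multiplier operator `m(D) f = (𝓕⁻¹ m) * f`. -/
def mulOp {d : ℕ} (m : Euc d → ℂ) (f : Euc d → ℂ) (x : Euc d) : ℂ :=
  ∫ y : Euc d, invFTd m (x - y) * f y

/-- The Hardy–Littlewood maximal function. -/
def HLMaximal {d : ℕ} (w : Euc d → ℝ) (x : Euc d) : ℝ≥0∞ :=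
  ⨆ r : {r : ℝ // 0 < r},
    (volume (Metric.ball x r.1))⁻¹ * ∫⁻ y in Metric.ball x r.1, ENNReal.ofReal (w y)

/-- `w` is an `A₁` weight. -/
structure IsA1Weight {d : ℕ} (w : Euc d → ℝ) : Prop where
  nonneg : ∀ x, 0 ≤ w x
  locInt : LocallyIntegrable w volume
  ne_zero : ¬ (w =ᵐ[(volume : Measure (Euc d))] (0 : Euc d → ℝ))
  maximal_le : ∃ C : ℝ, ∀ᵐ x ∂(volume : Measure (Euc d)),
    HLMaximal w x ≤ ENNReal.ofReal (C * w x)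

/-- `w` satisfies a reverse Hölder inequality with exponent `σ`. -/
def IsRH {d : ℕ} (σ : ℝ) (w : Euc d → ℝ) : Prop :=
  ∃ C : ℝ, ∀ (x : Euc d) (r : ℝ), 0 < r →
    ((volume (Metric.ball x r))⁻¹ *
        ∫⁻ y in Metric.ball x r, ENNReal.ofReal (w y) ^ σ) ^ (1 / σ) ≤
      ENNReal.ofReal C *
        ((volume (Metric.ball x r))⁻¹ * ∫⁻ y in Metric.ball x r, ENNReal.ofReal (w y))

/-- The weighted `L^p(w)` (quasi-)norm. -/
def wLpNorm {d : ℕ} (p : ℝ) (w : Euc d → ℝ) (g : Euc d → ℂ) : ℝ≥0∞ :=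
  (∫⁻ x, (‖g x‖₊ : ℝ≥0∞) ^ p * ENNReal.ofReal (w x)) ^ (1 / p)

/-- The weighted weak `L^{p,∞}(w)` (quasi-)norm. -/
def wWeakNorm {d : ℕ} (p : ℝ) (w : Euc d → ℝ) (g : Euc d → ℂ) : ℝ≥0∞ :=
  ⨆ α : {α : ℝ // 0 < α},
    ENNReal.ofReal α.1 *
      (∫⁻ x in {x : Euc d | α.1 < ‖g x‖}, ENNReal.ofReal (w x)) ^ (1 / p)

/-- A (half-open, axes-parallel) cube `x + [0,s)^d` in `ℝ^d`. -/
def IsCube {d : ℕ} (Q : Set (Euc d)) : Prop :=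
  ∃ (x : Euc d) (s : ℝ), 0 < s ∧ Q = {y : Euc d | ∀ i, y i ∈ Set.Ico (x i) (x i + s)}

/-- The average `⟨f⟩_{Q,p} = (|Q|⁻¹ ∫_Q |f|^p)^{1/p}`. -/
def cubeAvg {d : ℕ} (p : ℝ) (Q : Set (Euc d)) (f : Euc d → ℂ) : ℝ≥0∞ :=
  ((volume Q)⁻¹ * ∫⁻ x in Q, (‖f x‖₊ : ℝ≥0∞) ^ p) ^ (1 / p)

/-- A `γ`-sparse (finite) family of cubes. -/
def IsSparseFamily {d : ℕ} (γ : ℝ) (𝔖 : Finset (Set (Euc d))) : Prop :=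
  (∀ Q ∈ 𝔖, IsCube Q) ∧
  ∃ E : Set (Euc d) → Set (Euc d),
    (∀ Q ∈ 𝔖, MeasurableSet (E Q) ∧ E Q ⊆ Q ∧
      ENNReal.ofReal γ * volume Q ≤ volume (E Q)) ∧
    (𝔖 : Set (Set (Euc d))).Pairwise fun Q Q' => Disjoint (E Q) (E Q')

/-- The maximal sparse form `Λ*_{p,q}(f₁,f₂)` (supremum over `1/2`-sparse families). -/
def sparseFormMax {d : ℕ} (p q : ℝ) (f₁ f₂ : Euc d → ℂ) : ℝ≥0∞ :=
  ⨆ 𝔖 : {𝔖 : Finset (Set (Euc d)) // IsSparseFamily (1/2) 𝔖},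
    ∑ Q ∈ 𝔖.1, volume Q * cubeAvg p Q f₁ * cubeAvg q Q f₂

/-- The sparse bound `T ∈ Sp(p,q)`. -/
def SparseBound {d : ℕ} (p q : ℝ) (T : (Euc d → ℂ) → Euc d → ℂ) : Prop :=
  ∃ C : ℝ, ∀ f₁ f₂ : Euc d → ℂ,
    ContDiff ℝ (⊤ : ℕ∞) f₁ → HasCompactSupport f₁ →
    ContDiff ℝ (⊤ : ℕ∞) f₂ → HasCompactSupport f₂ →
    ENNReal.ofReal ‖∫ x, T f₁ x * f₂ x‖ ≤ ENNReal.ofReal C * sparseFormMax p q f₁ f₂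

/-- The exponent `r_*(p, p∘, r∘)`. -/
def rStar (d : ℕ) (p p0 r0 : ℝ) : ℝ :=
  if p ≤ 2 * ((d : ℝ) + 1) / ((d : ℝ) + 3) then
    (((d : ℝ) + 1) / ((d : ℝ) - 1) * (1 - 1 / p))⁻¹
  else
    ((1 / r0 * (((d : ℝ) + 3) / (2 * ((d : ℝ) + 1)) - 1 / p) +
        1 / 2 * (1 / p - 1 / p0)) /
      (((d : ℝ) + 3) / (2 * ((d : ℝ) + 1)) - 1 / p0))⁻¹

/-- The exponent `q_*(p, p∘, r∘)`, the conjugate of `r_*(p, p∘, r∘)`. -/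
def qStar (d : ℕ) (p p0 r0 : ℝ) : ℝ := (1 - 1 / rStar d p p0 r0)⁻¹

/-- The trapezoid `∏_d(λ)` with corners `P₁, P₂, P₃, P₄`. -/
def trapez (d : ℕ) (lam : ℝ) : Set (ℝ × ℝ) :=
  convexHull ℝ
    {((2*lam + (d:ℝ) + 1)/(2*(d:ℝ)), ((d:ℝ) - 2*lam - 1)/(2*(d:ℝ))),
     ((2*lam + (d:ℝ) + 1)/(2*(d:ℝ)),
       ((d:ℝ) - 1)/(2*(d:ℝ)) + lam*((d:ℝ) + 1)/((d:ℝ)*((d:ℝ) - 1))),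
     (((d:ℝ) - 1)/(2*(d:ℝ)) + lam*((d:ℝ) + 1)/((d:ℝ)*((d:ℝ) - 1)),
       (2*lam + (d:ℝ) + 1)/(2*(d:ℝ))),
     (((d:ℝ) - 2*lam - 1)/(2*(d:ℝ)), (2*lam + (d:ℝ) + 1)/(2*(d:ℝ)))}

/-- A dyadic cube `2^k(m + [0,1)^d)`, recorded by its generation `k` and position `m`. -/
structure DyadicCube (d : ℕ) where
  k : ℤ
  m : Fin d → ℤ
deriving DecidableEq

/-- The subset of `ℝ^d` corresponding to a dyadic cube. -/
def DyadicCube.set {d : ℕ} (Q : DyadicCube d) : Set (Euc d) :=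
  {x : Euc d | ∀ i, x i ∈ Set.Ico ((2:ℝ) ^ Q.k * (Q.m i : ℝ)) ((2:ℝ) ^ Q.k * ((Q.m i : ℝ) + 1))}

/-- `μ(𝔔) = Σ_{Q ∈ 𝔔} |Q|`. -/
def dyadicMeasure {d : ℕ} (𝔔 : Finset (DyadicCube d)) : ℝ≥0∞ :=
  ∑ Q ∈ 𝔔, volume Q.set

/-- The class `𝒴_M` of normalized bump functions. -/
def MemYM (M : ℕ) (χ : ℝ → ℂ) : Prop :=
  ContDiff ℝ (M : ℕ∞) χ ∧ Function.support χ ⊆ Set.Ioo (1/2 : ℝ) 2 ∧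
    ∑ ν ∈ Finset.range (M + 1), (⨆ s : ℝ, ‖iteratedDeriv ν χ s‖) ≤ 1

/-- The function `Σ_{j ≥ 1} 2^{j(d+1)/2} m_j(D)[Σ_{Q ∈ 𝔇_j} f_Q]` appearing in `VBR(p,r)`,
where `m_j(ξ) = χ_j(2^j(1 - ρ(ξ)))`. -/
def vbrSum {d : ℕ} (ρ : Euc d → ℝ) (χ : ℕ → ℝ → ℂ) (𝔉 : Finset (DyadicCube d))
    (f : DyadicCube d → Euc d → ℂ) (x : Euc d) : ℂ :=
  Finset.sum ((𝔉.image (fun Q => Q.k)).filter (fun j => 1 ≤ j)) fun (j : ℤ) =>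
    ((2:ℝ) ^ ((j : ℝ) * ((d : ℝ) + 1) / 2)) •
      mulOp (fun ξ => χ j.toNat ((2:ℝ) ^ j * (1 - ρ ξ)))
        (fun y => ∑ Q ∈ 𝔉.filter (fun Q' => Q'.k = j), f Q y) x

/-- The statement `VBR(p,r)`. -/
def VBR (d : ℕ) (ρ : Euc d → ℝ) (p r : ℝ) : Prop :=
  ∃ (M : ℕ) (C : ℝ), 1 ≤ M ∧
    ∀ χ : ℕ → ℝ → ℂ, (∀ j : ℕ, 1 ≤ j → MemYM M (χ j)) →
    ∀ (𝔉 : Finset (DyadicCube d)) (f : DyadicCube d → Euc d → ℂ),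
      (∀ Q ∈ 𝔉, Function.support (f Q) ⊆ closure Q.set) →
      eLpNorm (vbrSum ρ χ 𝔉 f) (ENNReal.ofReal r) volume ≤
        ENNReal.ofReal C *
          (∑ Q ∈ 𝔉, volume Q.set * eLpNorm (f Q) (ENNReal.ofReal p) volume ^ r) ^ (1 / r)

/-- `Hyp(p∘, r∘)`: `VBR(p,r)` holds for all `p ∈ [2(d+1)/(d+3), p∘)`
and all `r ∈ [p, r_*(p,p∘,r∘))`. -/
def Hyp (d : ℕ) (ρ : Euc d → ℝ) (p0 r0 : ℝ) : Prop :=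
  ∀ p r : ℝ, 2 * ((d : ℝ) + 1) / ((d : ℝ) + 3) ≤ p → p < p0 →
    p ≤ r → r < rStar d p p0 r0 → VBR d ρ p r

/-- The operator `A_{λ,ℓ} = 2^{ℓ(λ + (d+1)/2)} h_{λ,ℓ}(ρ(D))`. -/
def Aop {d : ℕ} (ρ : Euc d → ℝ) (h : ℕ → ℝ → ℂ) (lam : ℝ) (ℓ : ℕ)
    (f : Euc d → ℂ) (x : Euc d) : ℂ :=
  ((2:ℝ) ^ ((ℓ : ℝ) * (lam + ((d : ℝ) + 1) / 2))) • mulOp (fun ξ => h ℓ (ρ ξ)) f x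

/-- `𝒜_{s,𝔔} F = Σ_{ℓ ≥ s} Σ_{Q ∈ 𝔔_{ℓ-s}} A_{λ,ℓ}[F_Q 1_Q]`. -/
def AopSum {d : ℕ} (ρ : Euc d → ℝ) (h : ℕ → ℝ → ℂ) (lam : ℝ) (s : ℕ)
    (𝔔 : Finset (DyadicCube d)) (F : DyadicCube d → Euc d → ℂ) (x : Euc d) : ℂ :=
  ∑ Q ∈ 𝔔, Aop ρ h lam (Q.k.toNat + s) (Q.set.indicator (F Q)) x

/-- `Ξ_{s,𝔔}[F,β] = Σ_{ℓ ≥ s} Σ_{Q ∈ 𝔔_{ℓ-s}} β(Q) A_{λ,ℓ}[F_Q 1_Q]`. -/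
def XiSum {d : ℕ} (ρ : Euc d → ℝ) (h : ℕ → ℝ → ℂ) (lam : ℝ) (s : ℕ)
    (𝔔 : Finset (DyadicCube d)) (F : DyadicCube d → Euc d → ℂ)
    (β : DyadicCube d → ℂ) (x : Euc d) : ℂ :=
  ∑ Q ∈ 𝔔, β Q * Aop ρ h lam (Q.k.toNat + s) (Q.set.indicator (F Q)) x

/-- `‖F‖_{ℓ^∞(L^p)} = sup_{Q ∈ 𝔔} ‖F_Q‖_{L^p}`. -/
def supLp {d : ℕ} (p : ℝ) (𝔔 : Finset (DyadicCube d))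
    (F : DyadicCube d → Euc d → ℂ) : ℝ≥0∞ :=
  ⨆ Q ∈ 𝔔, eLpNorm (F Q) (ENNReal.ofReal p) volume

/-- `‖β‖_{ℓ^{r,1}(μ)} = ∫_0^∞ μ({Q ∈ 𝔔 : |β(Q)| > α})^{1/r} dα`. -/
def lorentzNorm {d : ℕ} (r : ℝ) (𝔔 : Finset (DyadicCube d))
    (β : DyadicCube d → ℂ) : ℝ≥0∞ :=
  ∫⁻ α in Set.Ioi (0:ℝ),
    (∑ Q ∈ 𝔔, if α < ‖β Q‖ then volume Q.set else 0) ^ (1 / r)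

section PsiAux

open Real Complex MeasureTheory Set SchwartzMap
open scoped FourierTransform

/-- A smooth compactly supported function is a Schwartz function. -/
noncomputable def toSchwartzOfCompact (f : ℝ → ℂ) (h1 : ContDiff ℝ (⊤ : ℕ∞) f)
    (h2 : HasCompactSupport f) : SchwartzMap ℝ ℂ where
  toFun := f
  smooth' := h1
  decay' := by
    intro k n
    have hcont : Continuous fun x : ℝ => ‖x‖ ^ k * ‖iteratedFDeriv ℝ n f x‖ :=
      (continuous_norm.pow k).mul (h1.continuous_iteratedFDeriv (by exact_mod_cast le_top)).norm
    have hsupp : HasCompactSupport fun x : ℝ => ‖x‖ ^ k * ‖iteratedFDeriv ℝ n f x‖ :=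
      ((h2.iteratedFDeriv n).norm).mul_left
    rcases hcont.bounded_above_of_compact_support hsupp with ⟨C, hC⟩
    exact ⟨C, fun x => (Real.le_norm_self _).trans (hC x)⟩

lemma psiAux_integrableOn (lam : ℝ) (hlam : 0 < lam) (k : ℕ) (hk : lam + 1 < k)
    (F : ℝ → ℂ) (hF : Continuous F) (C : ℝ)
    (hC1 : ∀ x : ℝ, ‖F x‖ ≤ C) (hC2 : ∀ x : ℝ, |x| ^ k * ‖F x‖ ≤ C) :
    IntegrableOn (fun ϱ : ℝ => (ϱ ^ lam : ℝ) • F ϱ) (Set.Ioi 0) := by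
  have hGcont : Continuous fun ϱ : ℝ => (ϱ ^ lam : ℝ) • F ϱ := by
    refine Continuous.smul (f := fun ϱ : ℝ => (ϱ ^ lam : ℝ)) (g := F) ?_ hF
    rw [continuous_iff_continuousAt]
    exact fun x => Real.continuousAt_rpow_const x lam (Or.inr hlam.le)
  have h1 : IntegrableOn (fun ϱ : ℝ => (ϱ ^ lam : ℝ) • F ϱ) (Set.Ioc 0 1) :=
    (hGcont.integrableOn_Icc (a := (0:ℝ)) (b := 1)).mono_set Set.Ioc_subset_Icc_self
  have h2 : IntegrableOn (fun ϱ : ℝ => (ϱ ^ lam : ℝ) • F ϱ) (Set.Ioi 1) := by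
    have hmaj : IntegrableOn (fun ϱ : ℝ => C * ϱ ^ (lam - k)) (Set.Ioi 1) :=
      (integrableOn_Ioi_rpow_of_lt (by push_cast; linarith) one_pos).const_mul C
    refine Integrable.mono hmaj hGcont.aestronglyMeasurable.restrict ?_
    filter_upwards [ae_restrict_mem measurableSet_Ioi] with x hx
    have hx1 : (1:ℝ) < x := hx
    have hx0 : (0:ℝ) < x := lt_trans one_pos hx1
    have hxk : (0:ℝ) < x ^ (k:ℝ) := Real.rpow_pos_of_pos hx0 _
    have hb : ‖F x‖ ≤ C * x ^ (-(k:ℝ)) := by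
      have h2 := hC2 x
      rw [abs_of_pos hx0, ← Real.rpow_natCast x k] at h2
      have := mul_le_mul_of_nonneg_left h2 (le_of_lt (Real.rpow_pos_of_pos hx0 (-(k:ℝ))))
      calc ‖F x‖ = x ^ (-(k:ℝ)) * (x ^ (k:ℝ) * ‖F x‖) := by
            rw [← mul_assoc, ← Real.rpow_add hx0]; simp
        _ ≤ x ^ (-(k:ℝ)) * C := this
        _ = C * x ^ (-(k:ℝ)) := mul_comm _ _
    rw [norm_smul, Real.norm_eq_abs, _root_.abs_of_nonneg (Real.rpow_nonneg hx0.le lam)]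
    calc x ^ lam * ‖F x‖ ≤ x ^ lam * (C * x ^ (-(k:ℝ))) := by
          exact mul_le_mul_of_nonneg_left hb (Real.rpow_nonneg hx0.le lam)
      _ = C * x ^ (lam - (k:ℝ)) := by
          rw [Real.rpow_sub hx0, Real.rpow_neg hx0.le, div_eq_mul_inv]; ring
      _ ≤ ‖C * x ^ (lam - (k:ℝ))‖ := le_abs_self _
  have := h1.union h2
  rwa [Set.Ioc_union_Ioi_eq_Ioi zero_le_one] at this

lemma psiAux_iteratedDeriv_sub {n : ℕ} {f g : ℝ → ℂ}
    (hf : ContDiff ℝ (⊤ : ℕ∞) f) (hg : ContDiff ℝ (⊤ : ℕ∞) g) (x : ℝ) :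
    iteratedDeriv n (fun y => f y - g y) x = iteratedDeriv n f x - iteratedDeriv n g x := by
  have : (fun y => f y - g y) = f - g := rfl
  rw [this, ← iteratedDerivWithin_univ, ← iteratedDerivWithin_univ, ← iteratedDerivWithin_univ]
  exact iteratedDerivWithin_sub (Set.mem_univ x) uniqueDiffOn_univ
    ((hf.of_le (by exact_mod_cast le_top)).contDiffWithinAt) ((hg.of_le (by exact_mod_cast le_top)).contDiffWithinAt)

lemma psiAux_iteratedDeriv_cmul {n : ℕ} {f : ℝ → ℂ} (c : ℂ)
    (hf : ContDiff ℝ (⊤ : ℕ∞) f) (x : ℝ) :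
    iteratedDeriv n (fun y => c * f y) x = c * iteratedDeriv n f x := by
  have h := iteratedDerivWithin_const_smul (𝕜 := ℝ) (s := (Set.univ : Set ℝ))
    (Set.mem_univ x) uniqueDiffOn_univ c ((hf.of_le (by exact_mod_cast le_top) : ContDiff ℝ n f).contDiffWithinAt)
  simpa [iteratedDerivWithin_univ, smul_eq_mul] using h

end PsiAux

/-- Properties of `Ψ(x) = Φ∘(x/2) - Φ∘(x)`: it is even, smooth, compactly
supported, vanishes for `|s| ≤ 1/2` and `|s| ≥ 2`, and satisfies the full set of moment
cancellation conditions. -/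
theorem Psi_properties (lam : ℝ) (hlam : 0 < lam) (N0 : ℕ) (Φ : ℝ → ℝ)
    (hΦsm : ContDiff ℝ (⊤ : ℕ∞) Φ) (hΦcpt : HasCompactSupport Φ)
    (hΦeven : ∀ s, Φ (-s) = Φ s)
    (hΦone : ∀ s : ℝ, |s| ≤ 1/2 → Φ s = 1) (hΦzero : ∀ s : ℝ, 1 ≤ |s| → Φ s = 0)
    (hΦcanc : ∀ j : ℕ, j ≤ N0 → (j : ℝ) ≠ lam →
      (∫ ϱ in Set.Ioi (0:ℝ), ((ϱ ^ lam : ℝ) : ℂ) * iteratedDeriv j (FT1R Φ) ϱ) = 0) :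
    ContDiff ℝ (⊤ : ℕ∞) (fun x : ℝ => Φ (x / 2) - Φ x) ∧
    HasCompactSupport (fun x : ℝ => Φ (x / 2) - Φ x) ∧
    (∀ s : ℝ, Φ (-s / 2) - Φ (-s) = Φ (s / 2) - Φ s) ∧
    (∀ s : ℝ, |s| ≤ 1/2 → Φ (s / 2) - Φ s = 0) ∧
    (∀ s : ℝ, 2 ≤ |s| → Φ (s / 2) - Φ s = 0) ∧
    (∀ j : ℕ, j ≤ N0 →
      (∫ ϱ in Set.Ioi (0:ℝ),
        ((ϱ ^ lam : ℝ) : ℂ) * iteratedDeriv j (FT1R (fun x => Φ (x / 2) - Φ x)) ϱ) = 0) := by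
  refine ⟨?_, ?_, ?_, ?_, ?_, ?_⟩
  · exact (hΦsm.comp (contDiff_id.div_const 2)).sub hΦsm
  · refine HasCompactSupport.intro (isCompact_Icc (a := (-2:ℝ)) (b := 2)) ?_
    intro x hx
    simp only [Set.mem_Icc, not_and_or, not_le] at hx
    have h2 : 2 ≤ |x| := by rcases hx with h | h <;> [skip; skip] <;> cases abs_cases x <;> linarith [abs_nonneg x, neg_abs_le x, le_abs_self x]
    have hx2 : 1 ≤ |x / 2| := by rw [abs_div]; simp only [abs_two]; linarith
    rw [hΦzero _ hx2, hΦzero _ (le_trans one_le_two h2), sub_self]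
  · intro s
    rw [neg_div, hΦeven (s / 2), hΦeven s]
  · intro s hs
    have h2 : |s / 2| ≤ 1/2 := by rw [abs_div]; simp only [abs_two]; linarith
    rw [hΦone _ h2, hΦone _ hs, sub_self]
  · intro s hs
    have h2 : 1 ≤ |s / 2| := by rw [abs_div]; simp only [abs_two]; linarith
    rw [hΦzero _ h2, hΦzero _ (le_trans one_le_two hs), sub_self]
  · intro j hj
    classical
    -- the complexified function and its Schwartz packaging
    have hΦc_sm : ContDiff ℝ (⊤ : ℕ∞) (fun s : ℝ => (Φ s : ℂ)) :=
      Complex.ofRealCLM.contDiff.comp hΦsm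
    have hΦc_cpt : HasCompactSupport (fun s : ℝ => (Φ s : ℂ)) :=
      hΦcpt.comp_left (g := Complex.ofReal) Complex.ofReal_zero
    set S0 : SchwartzMap ℝ ℂ := toSchwartzOfCompact _ hΦc_sm hΦc_cpt with hS0
    set S : SchwartzMap ℝ ℂ := SchwartzMap.fourierTransformCLM ℝ S0 with hS
    have hpi : (0:ℝ) < 2 * Real.pi := by positivity
    have hg_eq : FT1R Φ = fun ϱ => S ((2 * Real.pi)⁻¹ * ϱ) := by
      funext ϱ
      have h1 : (S : ℝ → ℂ) = FourierTransform.fourier (S0 : ℝ → ℂ) := by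
        rw [hS, SchwartzMap.fourierTransformCLM_apply, SchwartzMap.fourier_coe]
      have h2 : S ((2 * Real.pi)⁻¹ * ϱ) =
          ∫ s : ℝ, Complex.exp ((↑(-2 * Real.pi * (s * ((2 * Real.pi)⁻¹ * ϱ))) : ℂ)
            * Complex.I) • (Φ s : ℂ) := by
        rw [show S ((2 * Real.pi)⁻¹ * ϱ) = (S : ℝ → ℂ) ((2 * Real.pi)⁻¹ * ϱ) from rfl, h1,
          Real.fourier_real_eq_integral_exp_smul]
        congr 1
        funext v
        rw [mul_assoc (-2 * Real.pi)]
        rfl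
      rw [h2]
      unfold FT1R FT1
      congr 1
      funext s
      have harg : (-2 * Real.pi * (s * ((2 * Real.pi)⁻¹ * ϱ)) : ℝ) = -(s * ϱ) := by
        field_simp
      rw [harg, smul_eq_mul, mul_comm]
      congr 1
      push_cast
      ring_nf
    have hg_sm : ContDiff ℝ (⊤ : ℕ∞) (FT1R Φ) := by
      rw [hg_eq]
      exact (S.smooth ⊤).comp (contDiff_const.mul contDiff_id)
    -- decay bounds for the derivatives of FT1R Φ
    have hGrep : iteratedDeriv j (FT1R Φ) =
        fun x => ((2 * Real.pi)⁻¹) ^ j • iteratedDeriv j (S : ℝ → ℂ) ((2 * Real.pi)⁻¹ * x) := by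
      rw [hg_eq]
      exact iteratedDeriv_comp_const_smul ((S.smooth ⊤).of_le (by exact_mod_cast le_top)) _
    set G : ℝ → ℂ := iteratedDeriv j (FT1R Φ) with hGdef
    have hGcont : Continuous G := hg_sm.continuous_iteratedDeriv j (by exact_mod_cast le_top)
    set k : ℕ := ⌈lam⌉₊ + 2 with hkdef
    have hk : lam + 1 < k := by
      have := Nat.le_ceil lam
      push_cast [hkdef]
      linarith
    obtain ⟨C, hC1, hC2⟩ : ∃ C : ℝ, (∀ x, ‖G x‖ ≤ C) ∧ (∀ x, |x| ^ k * ‖G x‖ ≤ C) := by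
      set c : ℝ := (2 * Real.pi)⁻¹ with hc
      have hc0 : 0 < c := by positivity
      refine ⟨max (c ^ j * SchwartzMap.seminorm ℝ 0 j S)
        ((2 * Real.pi) ^ k * c ^ j * SchwartzMap.seminorm ℝ k j S), ?_, ?_⟩
      · intro x
        rw [hGrep]
        refine le_trans ?_ (le_max_left _ _)
        rw [norm_smul, Real.norm_eq_abs, _root_.abs_of_pos (pow_pos hc0 j)]
        refine mul_le_mul_of_nonneg_left ?_ (le_of_lt (pow_pos hc0 j))
        have := SchwartzMap.le_seminorm' ℝ 0 j S (c * x)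
        simpa using this
      · intro x
        rw [hGrep]
        refine le_trans ?_ (le_max_right _ _)
        rw [norm_smul, Real.norm_eq_abs, _root_.abs_of_pos (pow_pos hc0 j)]
        have hxx : |x| ^ k = (2 * Real.pi) ^ k * |c * x| ^ k := by
          rw [abs_mul, _root_.abs_of_pos hc0, ← mul_pow, ← mul_assoc,
            mul_inv_cancel₀ (ne_of_gt hpi), one_mul]
        rw [hxx]
        have := SchwartzMap.le_seminorm' ℝ k j S (c * x)
        calc (2 * Real.pi) ^ k * |c * x| ^ k * (c ^ j * ‖iteratedDeriv j (S : ℝ → ℂ) (c * x)‖)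
            = (2 * Real.pi) ^ k * c ^ j * (|c * x| ^ k * ‖iteratedDeriv j (S : ℝ → ℂ) (c * x)‖) := by
              ring
          _ ≤ (2 * Real.pi) ^ k * c ^ j * SchwartzMap.seminorm ℝ k j S := by
              refine mul_le_mul_of_nonneg_left this (by positivity)
    -- integrability of both pieces
    have hint1 : IntegrableOn (fun ϱ : ℝ => (ϱ ^ lam : ℝ) • G ϱ) (Set.Ioi 0) :=
      psiAux_integrableOn lam hlam k hk G hGcont C hC1 hC2
    have hint2 : IntegrableOn (fun ϱ : ℝ => (ϱ ^ lam : ℝ) • G (2 * ϱ)) (Set.Ioi 0) := by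
      refine psiAux_integrableOn lam hlam k hk (fun x => G (2 * x))
        (hGcont.comp (continuous_const.mul continuous_id)) C (fun x => hC1 _) ?_
      intro x
      refine le_trans ?_ (hC2 (2 * x))
      have h1 : |x| ^ k ≤ |2 * x| ^ k := by
        refine pow_le_pow_left₀ (abs_nonneg x) ?_ k
        rw [abs_mul]
        have := abs_nonneg x
        simp only [abs_two]
        linarith
      exact mul_le_mul_of_nonneg_right h1 (norm_nonneg _)
    -- Fourier transform of Ψ
    have hΨFT : FT1R (fun x => Φ (x / 2) - Φ x) =
        fun ϱ => (2 : ℂ) * FT1R Φ (2 * ϱ) - FT1R Φ ϱ := by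
      funext ϱ
      have hcs2 : HasCompactSupport (fun s : ℝ => (Φ (s / 2) : ℂ)) := by
        have h := hΦc_cpt.comp_smul (c := (2:ℝ)⁻¹) (inv_ne_zero two_ne_zero)
        have : (fun s : ℝ => (Φ ((2:ℝ)⁻¹ • s) : ℂ)) = fun s : ℝ => (Φ (s / 2) : ℂ) := by
          funext s
          rw [smul_eq_mul, inv_mul_eq_div]
        rwa [this] at h
      have hint_a : Integrable (fun s : ℝ =>
          (Φ (s / 2) : ℂ) * Complex.exp (-(Complex.I * (s : ℂ) * (ϱ : ℂ)))) := by
        refine Continuous.integrable_of_hasCompactSupport ?_ (hcs2.mul_right)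
        exact (Complex.continuous_ofReal.comp (hΦsm.continuous.comp
          (continuous_id.div_const 2))).mul (Complex.continuous_exp.comp (by fun_prop))
      have hint_b : Integrable (fun s : ℝ =>
          (Φ s : ℂ) * Complex.exp (-(Complex.I * (s : ℂ) * (ϱ : ℂ)))) := by
        refine Continuous.integrable_of_hasCompactSupport ?_ (hΦc_cpt.mul_right)
        exact (Complex.continuous_ofReal.comp hΦsm.continuous).mul
          (Complex.continuous_exp.comp (by fun_prop))
      unfold FT1R FT1
      rw [show (fun s : ℝ => ((Φ (s / 2) - Φ s : ℝ) : ℂ)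
            * Complex.exp (-(Complex.I * (s : ℂ) * (ϱ : ℂ)))) =
          fun s : ℝ => (Φ (s / 2) : ℂ) * Complex.exp (-(Complex.I * (s : ℂ) * (ϱ : ℂ)))
            - (Φ s : ℂ) * Complex.exp (-(Complex.I * (s : ℂ) * (ϱ : ℂ))) by
        funext s; push_cast; ring]
      rw [integral_sub hint_a hint_b]
      congr 1
      have hsub := MeasureTheory.Measure.integral_comp_div
        (g := fun u : ℝ => (Φ u : ℂ) * Complex.exp (-(Complex.I * ((2 * u : ℝ) : ℂ) * (ϱ : ℂ)))) 2
      have hL : (∫ s : ℝ, (Φ (s / 2) : ℂ) * Complex.exp (-(Complex.I * (s : ℂ) * (ϱ : ℂ))))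
          = ∫ s : ℝ, (fun u : ℝ => (Φ u : ℂ)
            * Complex.exp (-(Complex.I * ((2 * u : ℝ) : ℂ) * (ϱ : ℂ)))) (s / 2) := by
        congr 1
        funext s
        show (Φ (s / 2) : ℂ) * Complex.exp (-(Complex.I * (s : ℂ) * (ϱ : ℂ)))
          = (Φ (s / 2) : ℂ) * Complex.exp (-(Complex.I * ((2 * (s / 2) : ℝ) : ℂ) * (ϱ : ℂ)))
        have h2s : (2:ℝ) * (s / 2) = s := by ring
        rw [h2s]
      rw [hL, hsub]
      have h5 : (∫ y : ℝ, (Φ y : ℂ) * Complex.exp (-(Complex.I * ((2 * y : ℝ) : ℂ) * (ϱ : ℂ))))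
          = ∫ s : ℝ, (Φ s : ℂ) * Complex.exp (-(Complex.I * (s : ℂ) * ((2 * ϱ : ℝ) : ℂ))) := by
        congr 1
        funext y
        congr 2
        push_cast
        ring
      rw [h5]
      simp only [Complex.real_smul]
      norm_num
    -- derivative identity
    have hsm2 : ContDiff ℝ (⊤ : ℕ∞) (fun ϱ : ℝ => FT1R Φ (2 * ϱ)) :=
      hg_sm.comp (contDiff_const.mul contDiff_id)
    have hitΨ : ∀ ϱ : ℝ, iteratedDeriv j (FT1R (fun x => Φ (x / 2) - Φ x)) ϱ =
        (2 : ℂ) * ((2:ℝ) ^ j • G (2 * ϱ)) - G ϱ := by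
      intro ϱ
      rw [hΨFT]
      rw [psiAux_iteratedDeriv_sub (contDiff_const.mul hsm2) hg_sm ϱ]
      congr 1
      rw [psiAux_iteratedDeriv_cmul 2 hsm2 ϱ]
      congr 1
      rw [show iteratedDeriv j (fun ϱ : ℝ => FT1R Φ (2 * ϱ)) =
        fun x => (2:ℝ) ^ j • iteratedDeriv j (FT1R Φ) (2 * x) from
        iteratedDeriv_comp_const_smul (hg_sm.of_le (by exact_mod_cast le_top)) 2]
    -- compute the integral
    have hintegrand : ∀ ϱ ∈ Set.Ioi (0:ℝ),
        ((ϱ ^ lam : ℝ) : ℂ) * iteratedDeriv j (FT1R (fun x => Φ (x / 2) - Φ x)) ϱ =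
        ((2:ℂ) ^ (j+1)) * ((ϱ ^ lam : ℝ) • G (2 * ϱ)) - (ϱ ^ lam : ℝ) • G ϱ := by
      intro ϱ _
      rw [hitΨ ϱ]
      push_cast [Complex.real_smul]
      ring
    rw [MeasureTheory.setIntegral_congr_fun measurableSet_Ioi hintegrand]
    rw [MeasureTheory.integral_sub (hint2.const_mul ((2:ℂ) ^ (j+1))) hint1,
      MeasureTheory.integral_const_mul]
    have hscale : (∫ ϱ in Set.Ioi (0:ℝ), (ϱ ^ lam : ℝ) • G (2 * ϱ)) =
        ((2:ℝ) ^ (-lam) * 2⁻¹) • ∫ u in Set.Ioi (0:ℝ), (u ^ lam : ℝ) • G u := by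
      have h1 : ∀ ϱ ∈ Set.Ioi (0:ℝ), (ϱ ^ lam : ℝ) • G (2 * ϱ) =
          (2:ℝ) ^ (-lam) • ((((2 * ϱ) ^ lam : ℝ)) • G (2 * ϱ)) := by
        intro ϱ hϱ
        rw [smul_smul]
        congr 1
        rw [Real.mul_rpow (by norm_num) (le_of_lt hϱ), ← mul_assoc,
          ← Real.rpow_add two_pos, neg_add_cancel, Real.rpow_zero, one_mul]
      rw [MeasureTheory.setIntegral_congr_fun measurableSet_Ioi h1, MeasureTheory.integral_smul]
      have h2 := MeasureTheory.integral_comp_mul_left_Ioi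
        (fun u : ℝ => (u ^ lam : ℝ) • G u) 0 (two_pos (α := ℝ))
      simp only [mul_zero] at h2
      rw [h2, smul_smul]
    rw [hscale]
    set I : ℂ := ∫ u in Set.Ioi (0:ℝ), (u ^ lam : ℝ) • G u with hIdef
    by_cases hcase : (j : ℝ) = lam
    · have hreal : ((2:ℝ) ^ (j+1) * ((2:ℝ) ^ (-lam) * 2⁻¹)) = 1 := by
        rw [← hcase, Real.rpow_neg (by norm_num), Real.rpow_natCast, pow_succ]
        field_simp
      have hcoef : ((2:ℂ) ^ (j+1)) * ((((2:ℝ) ^ (-lam) * 2⁻¹ : ℝ)) : ℂ) = 1 := by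
        have := congrArg (fun r : ℝ => (r : ℂ)) hreal
        push_cast at this ⊢
        linear_combination this
      rw [Complex.real_smul, ← mul_assoc, hcoef, one_mul, sub_self]
    · have hI0 : I = 0 := by
        have hc0 := hΦcanc j hj hcase
        rw [hIdef]
        simp_rw [Complex.real_smul]
        exact hc0
      rw [hI0]
      simp
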